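/- arXiv:2512.00372 — 3 statements merged into one kernel-verified Lean document; each statement's English description precedes it below -/
import Mathlib

section
/- For each H ∈ K°_n there exists T ∈ Sym(I^n) such that T(H) ⊆ [0,1]^n. -/
open Set Function

noncomputable section

abbrev E (n : ℕ) := EuclideanSpace ℝ (Fin n)

/-- `I^d × {0}^{n-d}` inside `ℝ^n`. -/
def IcubeD (n d : ℕ) : Set (E n) :=
  {x | (∀ i : Fin n, (i : ℕ) < d → x i ∈ Icc (-1 : ℝ) 1) ∧
       ∀ i : Fin n, d ≤ (i : ℕ) → x i = 0}

/-- The cube `I^n = [-1,1]^n`. -/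
def Icube (n : ℕ) : Set (E n) := IcubeD n n

/-- `H^d_{ij}(a,b) = {x ∈ I^d × {0}^{n-d} : a·x_i ≥ b·x_j}`. -/
def HsetD (n d : ℕ) (i j : Fin n) (a b : ℝ) : Set (E n) :=
  {x ∈ IcubeD n d | b * x j ≤ a * x i}

def Hset (n : ℕ) (i j : Fin n) (a b : ℝ) : Set (E n) := HsetD n n i j a b

/-- The family `ℋ^d` of the sets `H^d_{ij}(a,b)`, `a, b ∈ {-1,1}`. -/
def HfamD (n d : ℕ) : Set (Set (E n)) :=
  {H | ∃ i j : Fin n, (i : ℕ) < d ∧ (j : ℕ) < d ∧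
      ∃ a b : ℝ, (a = 1 ∨ a = -1) ∧ (b = 1 ∨ b = -1) ∧ H = HsetD n d i j a b}

def Hfam (n : ℕ) : Set (Set (E n)) := HfamD n n

/-- Fundamental subsets of `ℋ^d`. -/
def IsFundSubsetD (n d : ℕ) (S : Set (Set (E n))) : Prop :=
  S ⊆ HfamD n d ∧
  ∀ i j : Fin n, (i : ℕ) < d → (j : ℕ) < d → i ≤ j →
    (HsetD n d i j 1 (-1) ∈ S ∨ HsetD n d i j (-1) 1 ∈ S) ∧
    (HsetD n d i j 1 1 ∈ S ∨ HsetD n d i j (-1) (-1) ∈ S)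

def IsFundSubset (n : ℕ) (S : Set (Set (E n))) : Prop := IsFundSubsetD n n S

/-- `K°_d` (realized inside `ℝ^n` on the slice `I^d × {0}^{n-d}`). -/
def KoD (n d : ℕ) : Set (Set (E n)) :=
  {K | ∃ S, IsFundSubsetD n d S ∧ K = ⋂₀ S}

/-- `K°_n`. -/
def Ko (n : ℕ) : Set (Set (E n)) := KoD n n

/-- Symmetries of the cube `I^n`. -/
def SymI (n : ℕ) (γ : E n → E n) : Prop :=
  Isometry γ ∧ Surjective γ ∧ γ '' Icube n = Icube n

/-- Conformal affine maps `x ↦ λ U x + v`, `λ > 0`, `U ∈ O(n)`. -/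
def ConfAffine (n : ℕ) (L : E n → E n) : Prop :=
  ∃ (c : ℝ) (U : E n ≃ₗᵢ[ℝ] E n) (v : E n), 0 < c ∧ ∀ x, L x = c • U x + v

/-- `d`-dimensional cubes in `ℝ^n` (for `d ≥ 1`). -/
def IsCube (n d : ℕ) (C : Set (E n)) : Prop :=
  ∃ L : E n → E n, ConfAffine n L ∧ L '' C = IcubeD n d

/-- `K°_d(C)` for a `d`-dimensional cube `C` (with `K°_0(C) = {C}`). -/
def KoCube (n d : ℕ) (C : Set (E n)) : Set (Set (E n)) :=
  {K | (d = 0 ∧ K = C) ∨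
       (1 ≤ d ∧ ∃ L : E n → E n, ConfAffine n L ∧ L '' C = IcubeD n d ∧
          ∃ H ∈ KoD n d, K = L ⁻¹' H)}

/-- Faces of `I^d × {0}^{n-d}` of dimension `e`. -/
def IsFaceD (n d : ℕ) (f : Set (E n)) (e : ℕ) : Prop :=
  ∃ J : Fin n → Set ℝ,
    (∀ i : Fin n, (i : ℕ) < d → (J i = Icc (-1 : ℝ) 1 ∨ J i = {-1} ∨ J i = {1})) ∧
    (∀ i : Fin n, d ≤ (i : ℕ) → J i = {0}) ∧
    {i : Fin n | J i = Icc (-1 : ℝ) 1}.ncard = e ∧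
    f = {x : E n | ∀ i, x i ∈ J i}

/-- `c` is a face of dimension `e` of the `d`-dimensional cube `C`. -/
def FaceOfCubeDim (n d : ℕ) (C c : Set (E n)) (e : ℕ) : Prop :=
  ∃ L : E n → E n, ConfAffine n L ∧ L '' C = IcubeD n d ∧
    ∃ f, IsFaceD n d f e ∧ c = L ⁻¹' f

/-- The symmetric decomposition `K_d(C)` of a `d`-dimensional cube `C`. -/
def KcalCube (n d : ℕ) (C : Set (E n)) : Set (Set (E n)) :=
  {K | ∃ c e, FaceOfCubeDim n d C c e ∧ K ∈ KoCube n e c}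

/-- `∂K_d(C)`: union of the `K°` of the proper faces of `C`. -/
def KcalBdCube (n d : ℕ) (C : Set (E n)) : Set (Set (E n)) :=
  {K | ∃ c e, FaceOfCubeDim n d C c e ∧ e < d ∧ K ∈ KoCube n e c}

/-- The symmetric decomposition `K_n` of `I^n`. -/
def Kcal (n : ℕ) : Set (Set (E n)) :=
  {K | ∃ c e, IsFaceD n n c e ∧ K ∈ KoCube n e c}

/-- `∂K_n`: union of the `K°` of the proper faces of `I^n`. -/
def KcalBdI (n : ℕ) : Set (Set (E n)) :=
  {K | ∃ c e, IsFaceD n n c e ∧ e < n ∧ K ∈ KoCube n e c}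

/-- `∂_∘ C`: the union of the proper faces of the `d`-cube `C`. -/
def cellBd (n d : ℕ) (C : Set (E n)) : Set (E n) :=
  ⋃₀ {c | ∃ e, e < d ∧ FaceOfCubeDim n d C c e}

/-- The cone `Cone(x, Y) = {x + t (y - x) : y ∈ Y, t ∈ [0,1]}`. -/
def Cone (n : ℕ) (x : E n) (Y : Set (E n)) : Set (E n) :=
  {z | ∃ y ∈ Y, ∃ t : ℝ, t ∈ Icc (0 : ℝ) 1 ∧ z = x + t • (y - x)}

/-- Standard orthotopes `∏ [-a_i, a_i]`. -/
def StdOrtho (n : ℕ) (a : Fin n → ℝ) : Set (E n) :=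
  {x | ∀ i, x i ∈ Icc (-(a i)) (a i)}

/-- `n`-dimensional orthotopes in `ℝ^n`. -/
def IsOrtho (n : ℕ) (R : Set (E n)) : Prop :=
  ∃ (L : E n → E n) (a : Fin n → ℝ), Isometry L ∧ Surjective L ∧
    (∀ i, 0 < a i) ∧ L '' R = StdOrtho n a

/-- The cubic-stretching of the standard orthotope `∏ [-a_i, a_i]`. -/
def stretch (n : ℕ) (a : Fin n → ℝ) : E n → E n :=
  fun x => WithLp.toLp 2 (fun i => x i / a i)

/-- `K_n(R)` for an `n`-dimensional orthotope `R`. -/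
def KcalOrtho (n : ℕ) (R : Set (E n)) : Set (Set (E n)) :=
  {K | ∃ (L : E n → E n) (a : Fin n → ℝ), Isometry L ∧ Surjective L ∧
      (∀ i, 0 < a i) ∧ L '' R = StdOrtho n a ∧
      ∃ H ∈ Kcal n, K = L ⁻¹' (stretch n a ⁻¹' H)}

/-- Faces of an `n`-dimensional orthotope `R`. -/
def FaceOfOrtho (n : ℕ) (R c : Set (E n)) : Prop :=
  ∃ (L : E n → E n) (a : Fin n → ℝ), Isometry L ∧ Surjective L ∧
    (∀ i, 0 < a i) ∧ L '' R = StdOrtho n a ∧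
    ∃ f e, IsFaceD n n f e ∧ c = L ⁻¹' (stretch n a ⁻¹' f)

/-- The center `x_α` of the subcube `C_α`. -/
def xalpha (n l : ℕ) (α : Fin n → ℕ) : E n :=
  WithLp.toLp 2 (fun i => (2 * (α i : ℝ) + 1 - (l : ℝ)) / (l : ℝ))

/-- `T_α(x) = l (x - x_α)`, mapping `C_α` onto `I^n`. -/
def Talpha (n l : ℕ) (α : Fin n → ℕ) : E n → E n :=
  fun x => (l : ℝ) • (x - xalpha n l α)

/-- The refined symmetric decomposition `K_{n,l}`. -/
def Knl (n l : ℕ) : Set (Set (E n)) :=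
  {K | ∃ α : Fin n → ℕ, (∀ i, α i < l) ∧ ∃ H ∈ Kcal n, K = Talpha n l α ⁻¹' H}

/-- `Γ` is a group of surjective isometries of `ℝ^n`. -/
def IsIsomGroup (n : ℕ) (Γ : Set (E n → E n)) : Prop :=
  (∀ γ ∈ Γ, Isometry γ ∧ Surjective γ) ∧ id ∈ Γ ∧
  (∀ γ ∈ Γ, ∀ γ' ∈ Γ, γ ∘ γ' ∈ Γ) ∧
  ∀ γ ∈ Γ, ∃ γ' ∈ Γ, γ ∘ γ' = id ∧ γ' ∘ γ = id

/-- `D` is a fundamental domain of `Γ`. -/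
def IsFundDom (n : ℕ) (Γ : Set (E n → E n)) (D : Set (E n)) : Prop :=
  (∃ U : Set (E n), U.Nonempty ∧ IsOpen U ∧ IsConnected U ∧ D = closure U) ∧
  (⋃ γ ∈ Γ, γ '' D) = univ ∧
  (∀ x : E n, ∃ V : Set (E n), x ∈ V ∧ IsOpen V ∧
    {γ ∈ Γ | ((γ '' D) ∩ V).Nonempty}.Finite) ∧
  ∀ γ ∈ Γ, γ ≠ id → interior D ∩ interior (γ '' D) = ∅

/-- For each `H ∈ K°_n` there exists `T ∈ Sym(I^n)` with `T(H) ⊆ [0,1]^n`. -/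
theorem stmt4 (n : ℕ) (hn : 1 ≤ n) (H : Set (E n)) (hH : H ∈ Ko n) :
    ∃ T : E n → E n, SymI n T ∧ T '' H ⊆ {x : E n | ∀ i, x i ∈ Icc (0 : ℝ) 1} := by
  obtain ⟨S, hS, rfl⟩ := hH
  have hsel : ∀ i : Fin n, ∃ ε : ℝ, (ε = 1 ∨ ε = -1) ∧
      ∀ x ∈ ⋂₀ S, 0 ≤ ε * x i := by
    intro i
    obtain ⟨h1, _⟩ := hS.2 i i i.isLt i.isLt le_rfl
    rcases h1 with h | h
    · refine ⟨1, Or.inl rfl, fun x hx => ?_⟩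
      have h2 : (-1 : ℝ) * x i ≤ 1 * x i := (hx _ h).2
      linarith
    · refine ⟨-1, Or.inr rfl, fun x hx => ?_⟩
      have h2 : (1 : ℝ) * x i ≤ (-1) * x i := (hx _ h).2
      linarith
  choose ε hε1 hε2 using hsel
  have hεabs : ∀ i, |ε i| = 1 := fun i => by rcases hε1 i with h | h <;> simp [h]
  have hεsq : ∀ i, ε i * ε i = 1 := fun i => by rcases hε1 i with h | h <;> simp [h]
  set T : E n → E n := fun x => WithLp.toLp 2 (fun i => ε i * x i : Fin n → ℝ) with hT
  have hTapp : ∀ (x : E n) (i : Fin n), T x i = ε i * x i := fun x i => rfl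
  have hTT : ∀ x, T (T x) = x := by
    intro x
    ext i
    show ε i * (ε i * x i) = x i
    rw [← mul_assoc, hεsq, one_mul]
  have hsurj : Surjective T := fun y => ⟨T y, hTT y⟩
  have hiso : Isometry T := by
    intro x y
    simp only [edist_dist]
    congr 1
    rw [EuclideanSpace.dist_eq, EuclideanSpace.dist_eq]
    congr 1
    refine Finset.sum_congr rfl fun i _ => ?_
    rw [hTapp, hTapp, Real.dist_eq, Real.dist_eq, ← mul_sub, abs_mul, hεabs, one_mul]
  have hmemT : ∀ x : E n, T x ∈ Icube n ↔ x ∈ Icube n := by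
    intro x
    have key : ∀ i : Fin n, (ε i * x i ∈ Icc (-1 : ℝ) 1 ↔ x i ∈ Icc (-1 : ℝ) 1) := by
      intro i
      simp only [mem_Icc, ← abs_le, abs_mul, hεabs, one_mul]
    constructor
    · rintro ⟨h1, h2⟩
      refine ⟨fun i hi => (key i).mp (h1 i hi), fun i hi => absurd i.isLt (by omega)⟩
    · rintro ⟨h1, h2⟩
      refine ⟨fun i hi => (key i).mpr (h1 i hi), fun i hi => absurd i.isLt (by omega)⟩
  refine ⟨T, ⟨hiso, hsurj, ?_⟩, ?_⟩
  · ext y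
    constructor
    · rintro ⟨x, hx, rfl⟩
      exact (hmemT x).mpr hx
    · intro hy
      exact ⟨T y, (hmemT (T y)).mp (by rwa [hTT]), hTT y⟩
  · rintro y ⟨x, hx, rfl⟩
    intro i
    have hx0 : 0 ≤ ε i * x i := hε2 i x hx
    -- x ∈ Icube n:
    have hne : (HsetD n n ⟨0, hn⟩ ⟨0, hn⟩ 1 (-1) ∈ S ∨ HsetD n n ⟨0, hn⟩ ⟨0, hn⟩ (-1) 1 ∈ S) :=
      (hS.2 ⟨0, hn⟩ ⟨0, hn⟩ hn hn le_rfl).1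
    have hxI : x ∈ IcubeD n n := by
      rcases hne with h | h
      · exact (hx _ h).1
      · exact (hx _ h).1
    have hb : |x i| ≤ 1 := abs_le.mpr ⟨(hxI.1 i i.isLt).1, (hxI.1 i i.isLt).2⟩
    have hub : ε i * x i ≤ 1 := by
      calc ε i * x i ≤ |ε i * x i| := le_abs_self _
        _ = |x i| := by rw [abs_mul, hεabs, one_mul]
        _ ≤ 1 := hb
    exact ⟨hx0, hub⟩
end
end

section
/- If H ∈ K°_n satisfies H ∩ ∂I^n ≠ ∅, then there exists a facet F of I^n such that H ∩ ∂I^n ⊆ F. -/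
open Set Function

noncomputable section

private lemma exists_top_aux {α : Type*} (R : α → α → Prop)
    (htot : ∀ i j, R i j ∨ R j i) (htrans : ∀ i j k, R i j → R j k → R i k)
    (s : Finset α) (hs : s.Nonempty) : ∃ k ∈ s, ∀ i ∈ s, R i k := by
  classical
  induction s using Finset.induction_on with
  | empty => simp at hs
  | @insert a s ha ih =>
    rcases s.eq_empty_or_nonempty with rfl | hsne
    · refine ⟨a, by simp, ?_⟩
      intro i hi
      have hia : i = a := by simpa using hi
      subst hia
      exact (htot i i).elim id id
    · obtain ⟨k, hk, hmax⟩ := ih hsne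
      rcases htot a k with h1 | h2
      · refine ⟨k, Finset.mem_insert_of_mem hk, fun i hi => ?_⟩
        rcases Finset.mem_insert.1 hi with rfl | hi
        · exact h1
        · exact hmax i hi
      · refine ⟨a, Finset.mem_insert_self a s, fun i hi => ?_⟩
        rcases Finset.mem_insert.1 hi with rfl | hi
        · rcases htot i i with h | h <;> exact h
        · exact htrans i k a (hmax i hi) h2

/-- If `H ∈ K°_n` meets `∂I^n`, then `H ∩ ∂I^n` is contained in some facet of `I^n`. -/
theorem stmt5 (n : ℕ) (hn : 1 ≤ n) (H : Set (E n)) (hH : H ∈ Ko n)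
    (hne : (H ∩ frontier (Icube n)).Nonempty) :
    ∃ F : Set (E n), IsFaceD n n F (n - 1) ∧ H ∩ frontier (Icube n) ⊆ F := by
  classical
  obtain ⟨S, hS, rfl⟩ := hH
  haveI : Nonempty (Fin n) := ⟨⟨0, hn⟩⟩
  -- choose a sign for each coordinate
  have hsign : ∀ i : Fin n, ∃ e : ℝ, (e = 1 ∨ e = -1) ∧ ∀ x ∈ ⋂₀ S, 0 ≤ e * x i := by
    intro i
    rcases (hS.2 i i i.isLt i.isLt le_rfl).1 with h | h
    · exact ⟨1, Or.inl rfl, fun x hx => by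
        have := (Set.mem_sInter.mp hx _ h).2; linarith⟩
    · exact ⟨-1, Or.inr rfl, fun x hx => by
        have := (Set.mem_sInter.mp hx _ h).2; linarith⟩
  choose ε hε1 hεpos using hsign
  have hmemle : ∀ (i j : Fin n) (a b : ℝ), HsetD n n i j a b ∈ S →
      ∀ x ∈ ⋂₀ S, b * x j ≤ a * x i := by
    intro i j a b hmem x hx
    exact (Set.mem_sInter.mp hx _ hmem).2
  -- the comparison relation
  have htot' : ∀ i j : Fin n, i ≤ j →
      (∀ x ∈ ⋂₀ S, ε i * x i ≤ ε j * x j) ∨ (∀ x ∈ ⋂₀ S, ε j * x j ≤ ε i * x i) := by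
    intro i j hij
    obtain ⟨hsum, hdiff⟩ := hS.2 i j i.isLt j.isLt hij
    rcases hε1 i with hi | hi <;> rcases hε1 j with hj | hj
    · rcases hdiff with h | h
      · right; intro x hx; have := hmemle _ _ _ _ h x hx; rw [hi, hj]; linarith
      · left; intro x hx; have := hmemle _ _ _ _ h x hx; rw [hi, hj]; linarith
    · rcases hsum with h | h
      · right; intro x hx; have := hmemle _ _ _ _ h x hx; rw [hi, hj]; linarith
      · left; intro x hx; have := hmemle _ _ _ _ h x hx; rw [hi, hj]; linarith
    · rcases hsum with h | h
      · left; intro x hx; have := hmemle _ _ _ _ h x hx; rw [hi, hj]; linarith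
      · right; intro x hx; have := hmemle _ _ _ _ h x hx; rw [hi, hj]; linarith
    · rcases hdiff with h | h
      · left; intro x hx; have := hmemle _ _ _ _ h x hx; rw [hi, hj]; linarith
      · right; intro x hx; have := hmemle _ _ _ _ h x hx; rw [hi, hj]; linarith
  have htot : ∀ i j : Fin n,
      (∀ x ∈ ⋂₀ S, ε i * x i ≤ ε j * x j) ∨ (∀ x ∈ ⋂₀ S, ε j * x j ≤ ε i * x i) := by
    intro i j
    rcases le_total i j with h | h
    · exact htot' i j h
    · exact (htot' j i h).symm
  obtain ⟨k, -, hk⟩ := exists_top_aux (fun i j => ∀ x ∈ ⋂₀ S, ε i * x i ≤ ε j * x j)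
    htot (fun i j l h1 h2 x hx => le_trans (h1 x hx) (h2 x hx)) Finset.univ Finset.univ_nonempty
  have hkmax : ∀ (i : Fin n), ∀ x ∈ ⋂₀ S, ε i * x i ≤ ε k * x k :=
    fun i => hk i (Finset.mem_univ i)
  -- the facet
  set J : Fin n → Set ℝ := fun i => if i = k then ({ε k} : Set ℝ) else Icc (-1 : ℝ) 1 with hJ
  refine ⟨{x : E n | ∀ i, x i ∈ J i}, ⟨J, ?_, ?_, ?_, rfl⟩, ?_⟩
  · intro i _
    by_cases h : i = k
    · subst h
      rcases hε1 i with h1 | h1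
      · right; right; simp [hJ, h1]
      · right; left; simp [hJ, h1]
    · left; simp [hJ, h]
  · intro i hi
    exact absurd i.isLt (by omega)
  · have hset : {i : Fin n | J i = Icc (-1 : ℝ) 1} = {k}ᶜ := by
      ext i
      simp only [hJ, mem_setOf_eq, mem_compl_iff, mem_singleton_iff]
      constructor
      · intro h hik
        rw [if_pos hik] at h
        have h1 : (1 : ℝ) ∈ Icc (-1 : ℝ) 1 := by norm_num
        have h2 : (-1 : ℝ) ∈ Icc (-1 : ℝ) 1 := by norm_num
        rw [← h, mem_singleton_iff] at h1 h2
        linarith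
      · intro h; rw [if_neg h]
    rw [hset]
    simp [Set.ncard_eq_toFinset_card', Finset.card_compl]
  · rintro x ⟨hxH, hxfr⟩
    -- x is in the cube
    have hclosed : IsClosed (Icube n) := by
      have : Icube n = ⋂ i : Fin n, (fun y : E n => y i) ⁻¹' Icc (-1 : ℝ) 1 := by
        ext y
        simp only [Icube, IcubeD, mem_setOf_eq, mem_iInter, mem_preimage]
        constructor
        · intro hy i; exact hy.1 i i.isLt
        · intro hy; exact ⟨fun i _ => hy i, fun i hi => absurd i.isLt (by omega)⟩
      rw [this]
      exact isClosed_iInter fun i => (isClosed_Icc).preimage ((continuous_apply i).comp (PiLp.continuous_ofLp 2 _))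
    have hxcube : x ∈ Icube n := hclosed.frontier_subset hxfr
    have hxIcc : ∀ i : Fin n, x i ∈ Icc (-1 : ℝ) 1 := fun i => hxcube.1 i i.isLt
    -- some coordinate is ±1
    have hex : ∃ i : Fin n, x i = 1 ∨ x i = -1 := by
      by_contra hcon
      push_neg at hcon
      have hxint : x ∈ interior (Icube n) := by
        have hUopen : IsOpen {y : E n | ∀ i, y i ∈ Ioo (-1 : ℝ) 1} := by
          have : {y : E n | ∀ i, y i ∈ Ioo (-1 : ℝ) 1}
              = ⋂ i : Fin n, (fun y : E n => y i) ⁻¹' Ioo (-1 : ℝ) 1 := by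
            ext y; simp [mem_iInter]
          rw [this]
          exact isOpen_iInter_of_finite fun i => (isOpen_Ioo).preimage ((continuous_apply i).comp (PiLp.continuous_ofLp 2 _))
        have hUsub : {y : E n | ∀ i, y i ∈ Ioo (-1 : ℝ) 1} ⊆ Icube n := by
          intro y hy
          exact ⟨fun i _ => Ioo_subset_Icc_self (hy i), fun i hi => absurd i.isLt (by omega)⟩
        apply interior_maximal hUsub hUopen
        intro i
        have h1 := (hxIcc i).1
        have h2 := (hxIcc i).2
        have h3 := (hcon i).1
        have h4 := (hcon i).2
        constructor
        · rcases lt_or_eq_of_le h1 with h | h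
          · exact h
          · exact absurd h.symm h4
        · rcases lt_or_eq_of_le h2 with h | h
          · exact h
          · exact absurd h h3
      exact hxfr.2 hxint
    obtain ⟨i, hi⟩ := hex
    have h0 := hεpos i x hxH
    have hione : ε i * x i = 1 := by
      rcases hε1 i with h | h <;> rcases hi with h' | h' <;> rw [h, h'] at h0 ⊢ <;> linarith
    have hkub : ε k * x k ≤ 1 := by
      rcases hε1 k with h | h <;> rw [h] <;> [linarith [(hxIcc k).2]; linarith [(hxIcc k).1]]
    have hkone : ε k * x k = 1 := le_antisymm hkub (hione ▸ hkmax i x hxH)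
    have hxk : x k = ε k := by
      rcases hε1 k with h | h <;> rw [h] at hkone ⊢ <;> linarith
    intro i
    by_cases h : i = k
    · subst h
      simpa [hJ] using hxk
    · simpa [hJ, h] using hxIcc i
end
end

section
/- If H ∈ K°_n and F is a facet of I^n with H ∩ F ≠ ∅, then there exist H_F ∈ K°_{n−1}(F) and a face f_F of F such that H ∩ F = H_F ∩ f_F. -/
open Set Function

noncomputable section

-- (aux definitions for the proof)

/-- Coordinate `j` is forced to value `c` on `H ∩ F` by a constraint of `S` involving `k`. -/
def Forced (n : ℕ) (S : Set (Set (E n))) (k : Fin n) (ε : ℝ) (j : Fin n) (c : ℝ) : Prop :=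
  (∃ a b : ℝ, (a = 1 ∨ a = -1) ∧ (b = 1 ∨ b = -1) ∧ a * ε = -1 ∧ b * c = -1 ∧
    HsetD n n k j a b ∈ S) ∨
  (∃ a b : ℝ, (a = 1 ∨ a = -1) ∧ (b = 1 ∨ b = -1) ∧ b * ε = 1 ∧ a * c = 1 ∧
    HsetD n n j k a b ∈ S)

open Classical in
/-- The interval data of the face recording forced coordinates. -/
noncomputable def Jface (n : ℕ) (S : Set (Set (E n))) (k : Fin n) (ε : ℝ)
    (τ : Equiv.Perm (Fin n)) : Fin n → Set ℝ :=
  fun i =>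
    if (i : ℕ) < n - 1 then
      if Forced n S k ε (τ i) 1 then {1}
      else if Forced n S k ε (τ i) (-1) then {-1}
      else Icc (-1 : ℝ) 1
    else {0}

lemma HsetD_symm (n d : ℕ) (i j : Fin n) (a b : ℝ) :
    HsetD n d i j a b = HsetD n d j i (-b) (-a) := by
  ext x
  simp only [HsetD, Set.mem_setOf_eq, Set.mem_sep_iff]
  constructor <;> rintro ⟨h1, h2⟩ <;> exact ⟨h1, by linarith⟩

lemma HsetD_symm_num (n d : ℕ) (i j : Fin n) :
    HsetD n d j i 1 (-1) = HsetD n d i j 1 (-1) ∧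
    HsetD n d j i (-1) 1 = HsetD n d i j (-1) 1 ∧
    HsetD n d j i 1 1 = HsetD n d i j (-1) (-1) ∧
    HsetD n d j i (-1) (-1) = HsetD n d i j 1 1 := by
  refine ⟨?_, ?_, ?_, ?_⟩ <;> · rw [HsetD_symm n d j i]; try norm_num

/-- If `H ∈ K°_n` and `F` is a facet of `I^n` with `H ∩ F ≠ ∅`, then there are
`H_F ∈ K°_{n-1}(F)` and a face `f_F` of `F` with `H ∩ F = H_F ∩ f_F`. -/
theorem stmt6 (n : ℕ) (hn : 1 ≤ n) (H : Set (E n)) (hH : H ∈ Ko n)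
    (F : Set (E n)) (hF : IsFaceD n n F (n - 1)) (hHF : (H ∩ F).Nonempty) :
    ∃ HF ∈ KoCube n (n - 1) F, ∃ fF : Set (E n),
      (∃ e, FaceOfCubeDim n (n - 1) F fF e) ∧ H ∩ F = HF ∩ fF := by
  classical
  obtain ⟨S, hSf, rfl⟩ := hH
  obtain ⟨J, hJlt, -, hncard, hFeq⟩ := hF
  -- extract the unique non-free coordinate k
  have hcompl : ({i : Fin n | J i = Icc (-1:ℝ) 1}ᶜ).ncard = 1 := by
    have h1 := Set.ncard_add_ncard_compl {i : Fin n | J i = Icc (-1:ℝ) 1}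
    rw [hncard] at h1
    have h2 : Nat.card (Fin n) = n := by simp
    omega
  obtain ⟨k, hk⟩ := Set.ncard_eq_one.mp hcompl
  have hJk' : J k ≠ Icc (-1:ℝ) 1 := by
    have : k ∈ {i : Fin n | J i = Icc (-1:ℝ) 1}ᶜ := by rw [hk]; exact rfl
    simpa using this
  have hJne : ∀ i : Fin n, i ≠ k → J i = Icc (-1:ℝ) 1 := by
    intro i hi
    by_contra h
    have : i ∈ {i : Fin n | J i = Icc (-1:ℝ) 1}ᶜ := h
    rw [hk] at this
    exact hi this
  obtain ⟨ε, hε, hJk⟩ : ∃ ε : ℝ, (ε = 1 ∨ ε = -1) ∧ J k = {ε} := by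
    rcases hJlt k k.isLt with h | h | h
    · exact absurd h hJk'
    · exact ⟨-1, Or.inr rfl, h⟩
    · exact ⟨1, Or.inl rfl, h⟩
  have hεI : ε ∈ Icc (-1:ℝ) 1 := by rcases hε with rfl | rfl <;> norm_num
  have hFmem : ∀ x : E n, x ∈ F ↔ (x k = ε ∧ ∀ i, x i ∈ Icc (-1:ℝ) 1) := by
    intro x
    rw [hFeq]
    constructor
    · intro h
      have hk0 : x k = ε := by have := h k; rwa [hJk, Set.mem_singleton_iff] at this
      refine ⟨hk0, fun i => ?_⟩
      by_cases hik : i = k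
      · subst hik; rw [hk0]; exact hεI
      · have := h i; rwa [hJne i hik] at this
    · rintro ⟨h1, h2⟩ i
      by_cases hik : i = k
      · subst hik; rw [hJk]; exact h1
      · rw [hJne i hik]; exact h2 i
  obtain ⟨x₀, hx₀H, hx₀F⟩ := hHF
  obtain ⟨hx₀k, hx₀I⟩ := (hFmem x₀).1 hx₀F
  -- forced coordinates take the forced value
  have forced_val : ∀ x : E n, x ∈ ⋂₀ S → x k = ε → (∀ i, x i ∈ Icc (-1:ℝ) 1) →
      ∀ (j : Fin n) (c : ℝ), Forced n S k ε j c → x j = c := by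
    intro x hx hxk hxI j c hf
    rcases hf with ⟨a, b, ha, hb, hae, hbc, hmem⟩ | ⟨a, b, ha, hb, hbe, hac, hmem⟩
    · have h1 : b * x j ≤ a * x k := (hx _ hmem).2
      rw [hxk] at h1
      obtain ⟨hl, hr⟩ := hxI j
      rcases hb with rfl | rfl <;> nlinarith
    · have h1 : b * x k ≤ a * x j := (hx _ hmem).2
      rw [hxk] at h1
      obtain ⟨hl, hr⟩ := hxI j
      rcases ha with rfl | rfl <;> nlinarith
  have hnotboth : ∀ j : Fin n, Forced n S k ε j 1 → Forced n S k ε j (-1) → False := by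
    intro j h1 h2
    have e1 := forced_val x₀ hx₀H hx₀k hx₀I j 1 h1
    have e2 := forced_val x₀ hx₀H hx₀k hx₀I j (-1) h2
    linarith
  rcases Nat.lt_or_ge n 2 with hn2 | hn2
  · -- n = 1
    have hn1 : n = 1 := by omega
    subst hn1
    set p : E 1 := WithLp.toLp 2 (fun _ => ε : Fin 1 → ℝ) with hp
    have hkall : ∀ i : Fin 1, i = k := fun i => Subsingleton.elim i k
    have hFp : F = {p} := by
      ext x
      rw [hFmem, Set.mem_singleton_iff]
      constructor
      · rintro ⟨h1, -⟩
        ext i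
        rw [hkall i]; exact h1
      · rintro rfl
        exact ⟨rfl, fun i => hεI⟩
    have hpH : p ∈ ⋂₀ S := by
      have : x₀ = p := by rw [hFp] at hx₀F; exact hx₀F
      rwa [this] at hx₀H
    have hne01 : ({0} : Set ℝ) ≠ Icc (-1:ℝ) 1 := by
      intro h
      have : (1:ℝ) ∈ ({0} : Set ℝ) := h ▸ (by norm_num : (1:ℝ) ∈ Icc (-1:ℝ) 1)
      simp at this
    refine ⟨F, Or.inl ⟨rfl, rfl⟩, F, ⟨0, ?_⟩, ?_⟩
    · refine ⟨fun x => x - p, ⟨1, LinearIsometryEquiv.refl ℝ (E 1), -p, one_pos,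
        fun x => by simp [sub_eq_add_neg]⟩, ?_, {x : E 1 | ∀ i, x i ∈ ({0} : Set ℝ)},
        ⟨fun _ => {0}, fun i hi => absurd hi (by omega), fun i _ => rfl, ?_, rfl⟩, ?_⟩
      · rw [hFp, Set.image_singleton]
        ext y
        simp only [Set.mem_singleton_iff, IcubeD, Set.mem_setOf_eq]
        constructor
        · rintro rfl
          exact ⟨fun i hi => absurd hi (by omega), fun i _ => by simp⟩
        · rintro ⟨-, h2⟩
          ext i
          simpa using h2 i (by omega)
      · have : {i : Fin 1 | ({0} : Set ℝ) = Icc (-1:ℝ) 1} = ∅ := by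
          ext i; simpa using hne01
        rw [this, Set.ncard_empty]
      · rw [hFp]
        ext x
        simp only [Set.mem_singleton_iff, Set.mem_preimage, Set.mem_setOf_eq,
          Set.mem_singleton_iff]
        constructor
        · rintro rfl; intro i; simp
        · intro h
          ext i
          have h2 : x i - p i = 0 := h i
          have h3 : x i = p i := by linarith
          exact h3
    · rw [Set.inter_self]
      apply Set.inter_eq_right.mpr
      intro x hx
      rw [hFp, Set.mem_singleton_iff] at hx
      subst hx
      exact hpH
  · -- n ≥ 2
    set lst : Fin n := ⟨n - 1, by omega⟩ with hlst
    have hlstval : (lst : ℕ) = n - 1 := rfl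
    have hklst : (k : ℕ) = n - 1 ↔ k = lst := by
      rw [Fin.ext_iff]
    set τ : Equiv.Perm (Fin n) := Equiv.swap k lst with hτ
    have hτk : τ k = lst := Equiv.swap_apply_left _ _
    have hτl : τ lst = k := Equiv.swap_apply_right _ _
    have hττ : ∀ i, τ (τ i) = i := fun i => Equiv.swap_apply_self _ _ _
    have hA : ∀ i : Fin n, i ≠ k → (τ i : ℕ) < n - 1 := by
      intro i hi
      by_cases hil : i = lst
      · subst hil
        rw [hτl]
        have hkl : k ≠ lst := fun h => hi (by rw [h])
        have : (k : ℕ) ≠ n - 1 := fun h => hkl (hklst.mp h)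
        have := k.isLt
        omega
      · rw [hτ, Equiv.swap_apply_of_ne_of_ne hi hil]
        have : (i : ℕ) ≠ n - 1 := fun h => hil (Fin.ext h)
        have := i.isLt
        omega
    have hBne : ∀ i : Fin n, (i : ℕ) < n - 1 → τ i ≠ k := by
      intro i h hc
      have : i = lst := by
        have h2 := congrArg τ hc
        rw [hττ, hτk] at h2
        exact h2
      rw [this] at h
      simp [hlst] at h
    have hτlst : ∀ i : Fin n, τ i = lst ↔ i = k := by
      intro i
      constructor
      · intro h
        have := congrArg τ h
        rwa [hττ, hτl] at this
      · rintro rfl; exact hτk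
    -- the conformal map L
    set L : E n → E n := fun x => WithLp.toLp 2 (fun i => x (τ i) + (if i = lst then -ε else 0) : Fin n → ℝ)
      with hL
    have hLapp : ∀ (x : E n) (i : Fin n), L x i = x (τ i) + (if i = lst then -ε else 0) :=
      fun x i => rfl
    have hLne : ∀ (x : E n) (i : Fin n), i ≠ lst → L x i = x (τ i) := by
      intro x i hi
      rw [hLapp, if_neg hi, add_zero]
    have hLlst : ∀ x : E n, L x lst = x k - ε := by
      intro x
      rw [hLapp, if_pos rfl, hτl]
      ring
    have hLconf : ConfAffine n L := by
      refine ⟨1, LinearIsometryEquiv.piLpCongrLeft 2 ℝ ℝ τ,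
        WithLp.toLp 2 (fun i => if i = lst then -ε else 0 : Fin n → ℝ), one_pos, fun x => ?_⟩
      ext i
      rw [hLapp]
      have : (LinearIsometryEquiv.piLpCongrLeft 2 ℝ ℝ τ x) i = x (τ.symm i) := by
        rw [LinearIsometryEquiv.piLpCongrLeft_apply]; rfl
      simp only [PiLp.add_apply, PiLp.smul_apply, one_smul, this]
      rw [hτ, Equiv.symm_swap]
    -- L maps F onto the slice
    have hLF : ∀ x : E n, x ∈ F → L x ∈ IcubeD n (n - 1) := by
      intro x hx
      obtain ⟨hxk, hxI⟩ := (hFmem x).1 hx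
      constructor
      · intro i hi
        have hine : i ≠ lst := fun h => by rw [h, hlstval] at hi; omega
        rw [hLne x i hine]
        exact hxI _
      · intro i hi
        have : i = lst := Fin.ext (by have hh := i.isLt; rw [hlstval]; omega)
        subst this
        rw [hLlst, hxk, sub_self]
    have hLim : L '' F = IcubeD n (n - 1) := by
      ext y
      constructor
      · rintro ⟨x, hx, rfl⟩
        exact hLF x hx
      · rintro ⟨h1, h2⟩
        refine ⟨WithLp.toLp 2 (fun i => y (τ i) + (if i = k then ε else 0) : Fin n → ℝ), ?_, ?_⟩
        · rw [hFmem]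
          constructor
          · show y (τ k) + (if k = k then ε else 0) = ε
            rw [if_pos rfl, hτk, h2 lst (le_of_eq hlstval.symm), zero_add]
          · intro i
            by_cases hik : i = k
            · show y (τ i) + (if i = k then ε else 0) ∈ _
              rw [if_pos hik, hik, hτk, h2 lst (le_of_eq hlstval.symm), zero_add]
              exact hεI
            · show y (τ i) + (if i = k then ε else 0) ∈ _
              rw [if_neg hik, add_zero]
              exact h1 _ (hA i hik)
        · ext i
          show (y (τ (τ i)) + (if τ i = k then ε else 0)) + (if i = lst then -ε else 0) = y i
          rw [hττ]
          by_cases hil : i = lst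
          · subst hil
            rw [if_pos (hτl), if_pos rfl]
            ring
          · have : τ i ≠ k := by
              intro hc
              have := congrArg τ hc
              rw [hττ, hτk] at this
              exact hil this
            rw [if_neg this, if_neg hil]
            ring
    -- the restricted fundamental subset
    set S' : Set (Set (E n)) := {T | ∃ (i j : Fin n) (a b : ℝ),
      (a = 1 ∨ a = -1) ∧ (b = 1 ∨ b = -1) ∧ i ≠ k ∧ j ≠ k ∧
      HsetD n n i j a b ∈ S ∧ T = HsetD n (n - 1) (τ i) (τ j) a b} with hS'
    have hS'fund : IsFundSubsetD n (n - 1) S' := by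
      constructor
      · rintro T ⟨i, j, a, b, ha, hb, hik, hjk, hmem, rfl⟩
        exact ⟨τ i, τ j, hA i hik, hA j hjk, a, b, ha, hb, rfl⟩
      · intro i' j' hi' hj' hij'
        have hik : τ i' ≠ k := hBne i' hi'
        have hjk : τ j' ≠ k := hBne j' hj'
        rcases le_total (τ i') (τ j') with hle | hle
        · obtain ⟨c1, c2⟩ := hSf.2 (τ i') (τ j') (τ i').isLt (τ j').isLt hle
          constructor
          · rcases c1 with h | h
            · exact Or.inl ⟨τ i', τ j', 1, -1, Or.inl rfl, Or.inr rfl, hik, hjk, h,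
                by rw [hττ, hττ]⟩
            · exact Or.inr ⟨τ i', τ j', -1, 1, Or.inr rfl, Or.inl rfl, hik, hjk, h,
                by rw [hττ, hττ]⟩
          · rcases c2 with h | h
            · exact Or.inl ⟨τ i', τ j', 1, 1, Or.inl rfl, Or.inl rfl, hik, hjk, h,
                by rw [hττ, hττ]⟩
            · exact Or.inr ⟨τ i', τ j', -1, -1, Or.inr rfl, Or.inr rfl, hik, hjk, h,
                by rw [hττ, hττ]⟩
        · obtain ⟨c1, c2⟩ := hSf.2 (τ j') (τ i') (τ j').isLt (τ i').isLt hle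
          constructor
          · rcases c1 with h | h
            · refine Or.inl ⟨τ j', τ i', 1, -1, Or.inl rfl, Or.inr rfl, hjk, hik, h, ?_⟩
              rw [hττ, hττ, (HsetD_symm_num n (n-1) i' j').1]
            · refine Or.inr ⟨τ j', τ i', -1, 1, Or.inr rfl, Or.inl rfl, hjk, hik, h, ?_⟩
              rw [hττ, hττ, (HsetD_symm_num n (n-1) i' j').2.1]
          · rcases c2 with h | h
            · refine Or.inr ⟨τ j', τ i', 1, 1, Or.inl rfl, Or.inl rfl, hjk, hik, h, ?_⟩
              rw [hττ, hττ, (HsetD_symm_num n (n-1) i' j').2.2.1]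
            · refine Or.inl ⟨τ j', τ i', -1, -1, Or.inr rfl, Or.inr rfl, hjk, hik, h, ?_⟩
              rw [hττ, hττ, (HsetD_symm_num n (n-1) i' j').2.2.2]
    -- the face f
    set Jf : Fin n → Set ℝ := Jface n S k ε τ with hJf
    have hJfval : ∀ i : Fin n, (i : ℕ) < n - 1 →
        Jf i = (if Forced n S k ε (τ i) 1 then {1}
          else if Forced n S k ε (τ i) (-1) then {-1} else Icc (-1 : ℝ) 1) := by
      intro i hi
      rw [hJf]
      unfold Jface
      rw [if_pos hi]
    have hJflst : ∀ i : Fin n, ¬ ((i : ℕ) < n - 1) → Jf i = {0} := by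
      intro i hi
      rw [hJf]
      unfold Jface
      rw [if_neg hi]
    have hJfsub : ∀ i : Fin n, (i : ℕ) < n - 1 → Jf i ⊆ Icc (-1:ℝ) 1 := by
      intro i hi
      rw [hJfval i hi]
      by_cases h1 : Forced n S k ε (τ i) 1
      · rw [if_pos h1]; intro x hx; rw [Set.mem_singleton_iff] at hx; subst hx; norm_num
      · rw [if_neg h1]
        by_cases h2 : Forced n S k ε (τ i) (-1)
        · rw [if_pos h2]; intro x hx; rw [Set.mem_singleton_iff] at hx; subst hx; norm_num
        · rw [if_neg h2]
    set f : Set (E n) := {x : E n | ∀ i, x i ∈ Jf i} with hf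
    have hface : IsFaceD n (n - 1) f ({i : Fin n | Jf i = Icc (-1:ℝ) 1}.ncard) := by
      refine ⟨Jf, ?_, ?_, rfl, rfl⟩
      · intro i hi
        rw [hJfval i hi]
        by_cases h1 : Forced n S k ε (τ i) 1
        · rw [if_pos h1]; exact Or.inr (Or.inr rfl)
        · rw [if_neg h1]
          by_cases h2 : Forced n S k ε (τ i) (-1)
          · rw [if_pos h2]; exact Or.inr (Or.inl rfl)
          · rw [if_neg h2]; exact Or.inl rfl
      · intro i hi
        exact hJflst i (by omega)
    -- main equality
    have hmain : (⋂₀ S) ∩ F = (L ⁻¹' ⋂₀ S') ∩ (L ⁻¹' f) := by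
      ext x
      simp only [Set.mem_inter_iff, Set.mem_preimage]
      constructor
      · rintro ⟨hxH, hxF⟩
        obtain ⟨hxk, hxI⟩ := (hFmem x).1 hxF
        have hLx : L x ∈ IcubeD n (n - 1) := hLF x hxF
        constructor
        · rintro T ⟨i, j, a, b, ha, hb, hik, hjk, hmem, rfl⟩
          refine ⟨hLx, ?_⟩
          have hi' : L x (τ i) = x i := by
            rw [hLne x (τ i) (fun h => hik ((hτlst i).mp h)), hττ]
          have hj' : L x (τ j) = x j := by
            rw [hLne x (τ j) (fun h => hjk ((hτlst j).mp h)), hττ]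
          rw [hi', hj']
          exact (hxH _ hmem).2
        · intro i
          by_cases hi : (i : ℕ) < n - 1
          · rw [hJfval i hi]
            have hine : i ≠ lst := fun h => by rw [h, hlstval] at hi; omega
            have hLi : L x i = x (τ i) := hLne x i hine
            by_cases h1 : Forced n S k ε (τ i) 1
            · rw [if_pos h1, Set.mem_singleton_iff, hLi]
              exact forced_val x hxH hxk hxI (τ i) 1 h1
            · rw [if_neg h1]
              by_cases h2 : Forced n S k ε (τ i) (-1)
              · rw [if_pos h2, Set.mem_singleton_iff, hLi]
                exact forced_val x hxH hxk hxI (τ i) (-1) h2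
              · rw [if_neg h2, hLi]
                exact hxI _
          · rw [hJflst i hi, Set.mem_singleton_iff]
            have : i = lst := Fin.ext (by have hh := i.isLt; rw [hlstval]; omega)
            subst this
            rw [hLlst, hxk, sub_self]
      · rintro ⟨hxH', hxf⟩
        -- first: x ∈ F
        have hxk : x k = ε := by
          have h0 := hxf lst
          rw [hJflst lst (by rw [hlstval]; omega), Set.mem_singleton_iff, hLlst] at h0
          linarith
        have hxI : ∀ i, x i ∈ Icc (-1:ℝ) 1 := by
          intro i
          by_cases hik : i = k
          · subst hik; rw [hxk]; exact hεI
          · have hti : (τ i : ℕ) < n - 1 := hA i hik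
            have : L x (τ i) = x i := by
              rw [hLne x (τ i) (fun h => hik ((hτlst i).mp h)), hττ]
            have := hJfsub (τ i) hti (hxf (τ i))
            rwa [hLne x (τ i) (fun h => hik ((hτlst i).mp h)), hττ] at this
        have hxF : x ∈ F := (hFmem x).2 ⟨hxk, hxI⟩
        refine ⟨?_, hxF⟩
        intro T hT
        obtain ⟨i, j, -, -, a, b, ha, hb, rfl⟩ := hSf.1 hT
        refine ⟨⟨fun i _ => hxI i, fun i hi => absurd i.isLt (by omega)⟩, ?_⟩
        -- the forced-value reader from hxf
        have read : ∀ j₀ : Fin n, j₀ ≠ k → ∀ c : ℝ, Forced n S k ε j₀ c →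
            (c = 1 ∨ c = -1) → x j₀ = c := by
          intro j₀ hj₀ c hfc hc
          have htj : (τ j₀ : ℕ) < n - 1 := hA j₀ hj₀
          have hL0 : L x (τ j₀) = x j₀ := by
            rw [hLne x (τ j₀) (fun h => hj₀ ((hτlst j₀).mp h)), hττ]
          have h0 := hxf (τ j₀)
          rw [hJfval (τ j₀) htj, hττ] at h0
          rcases hc with rfl | rfl
          · rw [if_pos hfc, Set.mem_singleton_iff, hL0] at h0
            exact h0
          · have hne1 : ¬ Forced n S k ε j₀ 1 := fun h => hnotboth j₀ h hfc
            rw [if_neg hne1, if_pos hfc, Set.mem_singleton_iff, hL0] at h0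
            exact h0
        by_cases hik : i = k <;> by_cases hjk : j = k
        · -- i = k, j = k
          rw [hik, hjk] at hT ⊢
          have h00 := (hx₀H _ hT).2
          rw [hx₀k] at h00
          rw [hxk]
          exact h00
        · -- i = k, j ≠ k
          rw [hik] at hT ⊢
          rw [hxk]
          have haε : a * ε = 1 ∨ a * ε = -1 := by
            rcases ha with rfl | rfl <;> rcases hε with h | h <;> rw [h] <;> norm_num
          rcases haε with haε | haε
          · obtain ⟨hl, hr⟩ := hxI j
            rw [haε]
            rcases hb with rfl | rfl <;> linarith
          · have hforce : Forced n S k ε j (-b) := by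
              refine Or.inl ⟨a, b, ha, hb, haε, ?_, hT⟩
              rcases hb with rfl | rfl <;> norm_num
            have hxj : x j = -b := by
              apply read j hjk (-b) hforce
              rcases hb with rfl | rfl
              · right; norm_num
              · left; norm_num
            rw [hxj, haε]
            rcases hb with rfl | rfl <;> norm_num
        · -- i ≠ k, j = k
          rw [hjk] at hT ⊢
          rw [hxk]
          have hbε : b * ε = 1 ∨ b * ε = -1 := by
            rcases hb with rfl | rfl <;> rcases hε with h | h <;> rw [h] <;> norm_num
          rcases hbε with hbε | hbε
          · have hforce : Forced n S k ε i a := by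
              refine Or.inr ⟨a, b, ha, hb, hbε, ?_, hT⟩
              rcases ha with rfl | rfl <;> norm_num
            have hxi : x i = a := read i hik a hforce ha
            rw [hxi, hbε]
            rcases ha with rfl | rfl <;> norm_num
          · obtain ⟨hl, hr⟩ := hxI i
            rw [hbε]
            rcases ha with rfl | rfl <;> linarith
        · -- i ≠ k, j ≠ k
          have hmem' : HsetD n (n-1) (τ i) (τ j) a b ∈ S' :=
            ⟨i, j, a, b, ha, hb, hik, hjk, hT, rfl⟩
          have := (hxH' _ hmem').2
          rwa [hLne x (τ i) (fun h => hik ((hτlst i).mp h)), hττ,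
            hLne x (τ j) (fun h => hjk ((hτlst j).mp h)), hττ] at this
    exact ⟨L ⁻¹' ⋂₀ S', Or.inr ⟨by omega, L, hLconf, hLim, ⋂₀ S', ⟨S', hS'fund, rfl⟩, rfl⟩,
      L ⁻¹' f, ⟨_, L, hLconf, hLim, f, hface, rfl⟩, hmain⟩
end
end
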